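/- If X = (X_1,…,X_n) is PRDS on I_0 and D ⊆ ℝ^n is an increasing set, then for each i ∈ I_0 and any 0 < a ≤ b ≤ 1, ℙ(X ∈ D | X_i ≤ a) ≤ ℙ(X ∈ D | X_i ≤ b), provided ℙ(X_i ≤ a) > 0. -/

import Mathlib

open MeasureTheory ProbabilityTheory

/-- PRDS monotonicity of sub-level conditioning: if `X` is PRDS on `I₀` — i.e.
for each increasing set `D` and `i ∈ I₀` there is a monotone version
`f x = ℙ(X ∈ D | X_i = x)` of the conditional probability — then for `i ∈ I₀`,
an increasing measurable `D`, and `0 < a ≤ b ≤ 1` with `ℙ(X_i ≤ a) > 0`,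
`ℙ(X ∈ D | X_i ≤ a) ≤ ℙ(X ∈ D | X_i ≤ b)`. -/
theorem stmt18 {Ω : Type*} [MeasurableSpace Ω] (μ : Measure Ω) [IsProbabilityMeasure μ]
    (n : ℕ) (X : Ω → (Fin n → ℝ)) (hX : Measurable X)
    (I0 : Set (Fin n)) (i : Fin n) (hi : i ∈ I0)
    (D : Set (Fin n → ℝ)) (hD : MeasurableSet D)
    (hinc : ∀ x ∈ D, ∀ y : Fin n → ℝ, (∀ k, x k ≤ y k) → y ∈ D)
    (f : ℝ → ℝ) (hf : Monotone f) (hf0 : ∀ x, 0 ≤ f x) (hf1 : ∀ x, f x ≤ 1)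
    (hker : ∀ s : Set ℝ, MeasurableSet s →
      μ ({ω | X ω i ∈ s} ∩ {ω | X ω ∈ D}) =
        ENNReal.ofReal (∫ x in s, f x ∂(μ.map (fun ω => X ω i))))
    (a b : ℝ) (ha : 0 < a) (hab : a ≤ b) (hb : b ≤ 1)
    (hpos : 0 < μ {ω | X ω i ≤ a}) :
    (ProbabilityTheory.cond μ {ω | X ω i ≤ a}) {ω | X ω ∈ D} ≤
      (ProbabilityTheory.cond μ {ω | X ω i ≤ b}) {ω | X ω ∈ D} := by
  set ν : Measure ℝ := μ.map (fun ω => X ω i) with hν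
  have hXi : Measurable fun ω => X ω i := (measurable_pi_apply i).comp hX
  have hνprob : IsProbabilityMeasure ν := Measure.isProbabilityMeasure_map hXi.aemeasurable
  -- measurability of events
  have hA : MeasurableSet {ω | X ω i ≤ a} := measurableSet_le hXi measurable_const
  have hB : MeasurableSet {ω | X ω i ≤ b} := measurableSet_le hXi measurable_const
  -- measures of the conditioning events
  have hmapA : μ {ω | X ω i ≤ a} = ν (Set.Iic a) := by
    rw [hν, Measure.map_apply hXi measurableSet_Iic]; rfl
  have hmapB : μ {ω | X ω i ≤ b} = ν (Set.Iic b) := by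
    rw [hν, Measure.map_apply hXi measurableSet_Iic]; rfl
  -- integrability of f
  have hfm : Measurable f := hf.measurable
  have hfint : Integrable f ν := by
    refine (integrable_const (1 : ℝ)).mono' hfm.aestronglyMeasurable ?_
    filter_upwards with x
    rw [Real.norm_eq_abs, abs_of_nonneg (hf0 x)]
    exact hf1 x
  -- kernel identities
  have hkA := hker (Set.Iic a) measurableSet_Iic
  have hkB := hker (Set.Iic b) measurableSet_Iic
  have hsetA : {ω | X ω i ∈ Set.Iic a} = {ω | X ω i ≤ a} := rfl
  have hsetB : {ω | X ω i ∈ Set.Iic b} = {ω | X ω i ≤ b} := rfl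
  rw [hsetA] at hkA
  rw [hsetB] at hkB
  -- real quantities
  set Ia : ℝ := ∫ x in Set.Iic a, f x ∂ν with hIa
  set Ib : ℝ := ∫ x in Set.Iic b, f x ∂ν with hIb
  set α : ENNReal := ν (Set.Iic a) with hα
  set β : ENNReal := ν (Set.Iic b) with hβ
  have hα0 : α ≠ 0 := hmapA ▸ hpos.ne'
  have hαt : α ≠ ⊤ := measure_ne_top ν _
  have hβ0 : β ≠ 0 := by
    intro h
    apply hα0
    rw [hα]
    exact le_antisymm (h ▸ measure_mono (Set.Iic_subset_Iic.mpr hab)) zero_le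
  have hβt : β ≠ ⊤ := measure_ne_top ν _
  have hαr : (0:ℝ) < α.toReal := ENNReal.toReal_pos hα0 hαt
  -- split Iic b = Iic a ∪ Ioc a b
  have hsplit : Set.Iic b = Set.Iic a ∪ Set.Ioc a b := (Set.Iic_union_Ioc_eq_Iic hab).symm
  have hdisj : Disjoint (Set.Iic a) (Set.Ioc a b) := by
    apply Set.disjoint_left.mpr
    intro x hx hx'
    exact absurd hx'.1 (not_lt.mpr hx)
  have hIbsplit : Ib = Ia + ∫ x in Set.Ioc a b, f x ∂ν := by
    rw [hIb, hIa, hsplit]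
    exact setIntegral_union hdisj measurableSet_Ioc hfint.integrableOn hfint.integrableOn
  have hγ : β = α + ν (Set.Ioc a b) := by
    rw [hβ, hα, hsplit, measure_union hdisj measurableSet_Ioc]
  set γ : ENNReal := ν (Set.Ioc a b) with hγ'
  have hγt : γ ≠ ⊤ := measure_ne_top ν _
  have hβr : β.toReal = α.toReal + γ.toReal := by
    rw [hγ, ENNReal.toReal_add hαt hγt]
  -- bounds on integrals
  have hIa_le : Ia ≤ f a * α.toReal := by
    have : Ia ≤ ∫ _x in Set.Iic a, f a ∂ν := by
      refine setIntegral_mono_on hfint.integrableOn (integrableOn_const ?_)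
        measurableSet_Iic fun x hx => hf hx
      exact measure_ne_top ν _
    rwa [setIntegral_const, smul_eq_mul, mul_comm] at this
  have hJ_ge : f a * γ.toReal ≤ ∫ x in Set.Ioc a b, f x ∂ν := by
    have : ∫ _x in Set.Ioc a b, f a ∂ν ≤ ∫ x in Set.Ioc a b, f x ∂ν := by
      refine setIntegral_mono_on (integrableOn_const ?_) hfint.integrableOn
        measurableSet_Ioc fun x hx => hf hx.1.le
      exact measure_ne_top ν _
    rwa [setIntegral_const, smul_eq_mul, mul_comm] at this
  have hIa_nonneg : 0 ≤ Ia := setIntegral_nonneg measurableSet_Iic fun x _ => hf0 x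
  have hγr : (0:ℝ) ≤ γ.toReal := ENNReal.toReal_nonneg
  -- key real inequality
  have hkey : Ia * β.toReal ≤ Ib * α.toReal := by
    rw [hβr, hIbsplit]
    nlinarith [hJ_ge, hIa_le, hγr, hαr.le]
  -- convert to ENNReal
  have hkeyE : β * ENNReal.ofReal Ia ≤ α * ENNReal.ofReal Ib := by
    have h1 : β = ENNReal.ofReal β.toReal := (ENNReal.ofReal_toReal hβt).symm
    have h2 : α = ENNReal.ofReal α.toReal := (ENNReal.ofReal_toReal hαt).symm
    rw [h1, h2, ← ENNReal.ofReal_mul ENNReal.toReal_nonneg,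
      ← ENNReal.ofReal_mul ENNReal.toReal_nonneg]
    exact ENNReal.ofReal_le_ofReal (by rw [mul_comm Ia, mul_comm Ib] at hkey; exact hkey)
  -- finish
  rw [cond_apply hA, cond_apply hB, hkA, hkB, hmapA, hmapB]
  rw [← ENNReal.mul_le_mul_iff_right (a := α * β) (mul_ne_zero hα0 hβ0)
    (ENNReal.mul_ne_top hαt hβt)]
  calc α * β * (α⁻¹ * ENNReal.ofReal Ia)
      = (α * α⁻¹) * (β * ENNReal.ofReal Ia) := by ring
    _ = β * ENNReal.ofReal Ia := by rw [ENNReal.mul_inv_cancel hα0 hαt, one_mul]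
    _ ≤ α * ENNReal.ofReal Ib := hkeyE
    _ = (β * β⁻¹) * (α * ENNReal.ofReal Ib) := by rw [ENNReal.mul_inv_cancel hβ0 hβt, one_mul]
    _ = α * β * (β⁻¹ * ENNReal.ofReal Ib) := by ring
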